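/- Let v ∈ ℤ³ be primitive with d² ∣ ‖v‖², and set Γ(v,d) = {a ∈ ℤ³ : d ∣ a × v and d² ∣ (a × v) × v}. If a, b ∈ Γ(v,d), then d divides a × b and (a × b)/d ∈ Γ(v,d). -/
import Mathlib


def dot3 (a b : Fin 3 → ℤ) : ℤ := a 0 * b 0 + a 1 * b 1 + a 2 * b 2

def cross3 (a b : Fin 3 → ℤ) : Fin 3 → ℤ :=
  ![a 1 * b 2 - a 2 * b 1, a 2 * b 0 - a 0 * b 2, a 0 * b 1 - a 1 * b 0]

lemma cross3_add_left (a b v : Fin 3 → ℤ) :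
    cross3 (a + b) v = cross3 a v + cross3 b v := by
  funext i; fin_cases i <;> simp [cross3] <;> ring

lemma cross3_zero_left (v : Fin 3 → ℤ) : cross3 0 v = 0 := by
  funext i; fin_cases i <;> simp [cross3]

lemma cross3_neg_left (a v : Fin 3 → ℤ) : cross3 (-a) v = -(cross3 a v) := by
  funext i; fin_cases i <;> simp [cross3] <;> ring

/-- The lattice `v^⊥` of integer vectors orthogonal to `v`. -/
def perpSub (v : Fin 3 → ℤ) : AddSubgroup (Fin 3 → ℤ) where
  carrier := {a | dot3 a v = 0}
  zero_mem' := by simp [dot3]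
  add_mem' := by
    intro a b ha hb
    simp only [Set.mem_setOf_eq, dot3, Pi.add_apply] at *
    linarith
  neg_mem' := by
    intro a ha
    simp only [Set.mem_setOf_eq, dot3, Pi.neg_apply] at *
    linarith

/-- The subgroup `M(v,d) = {a ∈ v^⊥ : d ∣ a × v}`. -/
def MSub (v : Fin 3 → ℤ) (d : ℤ) : AddSubgroup (Fin 3 → ℤ) where
  carrier := {a | dot3 a v = 0 ∧ ∀ i, d ∣ cross3 a v i}
  zero_mem' := ⟨by simp [dot3], by intro i; rw [cross3_zero_left]; simp⟩
  add_mem' := by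
    rintro a b ⟨ha, ha'⟩ ⟨hb, hb'⟩
    refine ⟨?_, ?_⟩
    · simp only [dot3, Pi.add_apply] at *; linarith
    · intro i; rw [cross3_add_left]; exact dvd_add (ha' i) (hb' i)
  neg_mem' := by
    rintro a ⟨ha, ha'⟩
    refine ⟨?_, ?_⟩
    · simp only [dot3, Pi.neg_apply] at *; linarith
    · intro i; rw [cross3_neg_left]; simpa using (ha' i).neg_right

/-- The subgroup `Γ(v,d) = {a : d ∣ a × v, d² ∣ (a × v) × v}`. -/
def GammaSub (v : Fin 3 → ℤ) (d : ℤ) : AddSubgroup (Fin 3 → ℤ) where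
  carrier := {a | (∀ i, d ∣ cross3 a v i) ∧ ∀ i, d^2 ∣ cross3 (cross3 a v) v i}
  zero_mem' := by
    constructor <;> intro i <;> rw [cross3_zero_left] <;> simp [cross3_zero_left]
  add_mem' := by
    rintro a b ⟨ha, ha'⟩ ⟨hb, hb'⟩
    refine ⟨fun i => ?_, fun i => ?_⟩
    · rw [cross3_add_left]; exact dvd_add (ha i) (hb i)
    · rw [cross3_add_left, cross3_add_left]; exact dvd_add (ha' i) (hb' i)
  neg_mem' := by
    rintro a ⟨ha, ha'⟩
    refine ⟨fun i => ?_, fun i => ?_⟩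
    · rw [cross3_neg_left]; simpa using (ha i).neg_right
    · rw [cross3_neg_left, cross3_neg_left]; simpa using (ha' i).neg_right

def Primitive (v : Fin 3 → ℤ) : Prop := Int.gcd (Int.gcd (v 0) (v 1)) (v 2) = 1

lemma triple1 (x y z : Fin 3 → ℤ) (i : Fin 3) :
    cross3 (cross3 x y) z i = dot3 x z * y i - dot3 y z * x i := by
  fin_cases i <;> simp [cross3, dot3] <;> ring

lemma triple2 (x y z : Fin 3 → ℤ) (i : Fin 3) :
    cross3 x (cross3 y z) i = dot3 x z * y i - dot3 x y * z i := by
  fin_cases i <;> simp [cross3, dot3] <;> ring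

lemma cross3_zero_right' (u : Fin 3 → ℤ) (i : Fin 3) :
    cross3 u (fun _ => (0:ℤ)) i = 0 := by
  fin_cases i <;> simp [cross3]

lemma exists_dot3_one (v : Fin 3 → ℤ) (hv : Primitive v) :
    ∃ u : Fin 3 → ℤ, dot3 u v = 1 := by
  have h1 := Int.gcd_eq_gcd_ab (v 0) (v 1)
  have h2 := Int.gcd_eq_gcd_ab ((Int.gcd (v 0) (v 1) : ℤ)) (v 2)
  rw [Primitive] at hv
  have hv' : ((Int.gcd ((Int.gcd (v 0) (v 1) : ℤ)) (v 2) : ℕ) : ℤ) = 1 := by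
    rw [hv]; rfl
  refine ⟨![Int.gcdA (v 0) (v 1) * Int.gcdA ((Int.gcd (v 0) (v 1) : ℤ)) (v 2),
           Int.gcdB (v 0) (v 1) * Int.gcdA ((Int.gcd (v 0) (v 1) : ℤ)) (v 2),
           Int.gcdB ((Int.gcd (v 0) (v 1) : ℤ)) (v 2)], ?_⟩
  simp only [dot3, Matrix.cons_val_zero, Matrix.cons_val_one, Matrix.head_cons,
    Matrix.cons_val_two, Matrix.tail_cons]
  linear_combination (-(Int.gcdA ((Int.gcd (v 0) (v 1) : ℤ)) (v 2))) * h1 - h2 + hv'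

lemma dot3_proj (a u v : Fin 3 → ℤ) (hu : dot3 u v = 1) :
    dot3 (fun j => a j - dot3 a v * u j) v = 0 := by
  simp only [dot3] at hu ⊢
  linear_combination (-(a 0 * v 0 + a 1 * v 1 + a 2 * v 2)) * hu

lemma detdvd (v u a₁ b₁ : Fin 3 → ℤ) (hu : dot3 u v = 1) (d : ℤ)
    (hN : d ∣ dot3 v v) (hpa : d ∣ dot3 a₁ v) (hpb : d ∣ dot3 b₁ v) :
    d ∣ dot3 (cross3 a₁ b₁) v := by
  set r : Fin 3 → ℤ := fun j => a₁ j - dot3 a₁ v * u j with hrdef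
  set r' : Fin 3 → ℤ := fun j => b₁ j - dot3 b₁ v * u j with hrdef'
  have hrv : dot3 r v = 0 := dot3_proj a₁ u v hu
  have hrv' : dot3 r' v = 0 := dot3_proj b₁ u v hu
  have hzv : cross3 (cross3 r r') v = fun _ => 0 := by
    funext i
    rw [triple1, hrv, hrv']; ring
  have hz : ∀ i, cross3 r r' i = dot3 u (cross3 r r') * v i := by
    intro i
    have k := triple2 u (cross3 r r') v i
    rw [hzv, cross3_zero_right', hu, one_mul] at k
    linarith
  have hdz : d ∣ dot3 (cross3 r r') v := by
    obtain ⟨k, hk⟩ : ∃ k, ∀ i, cross3 r r' i = k * v i := ⟨_, hz⟩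
    have e : dot3 (cross3 r r') v = k * dot3 v v := by
      simp only [dot3]
      rw [hk 0, hk 1, hk 2]; ring
    rw [e]; exact hN.mul_left _
  have h4 : dot3 (cross3 a₁ b₁) v
      = dot3 (cross3 r r') v + dot3 a₁ v * dot3 (cross3 u b₁) v
        + dot3 b₁ v * dot3 (cross3 a₁ u) v := by
    simp only [hrdef, hrdef', dot3, cross3, Matrix.cons_val_zero, Matrix.cons_val_one,
      Matrix.head_cons, Matrix.cons_val_two, Matrix.tail_cons]
    ring
  rw [h4]
  exact dvd_add (dvd_add hdz (hpa.mul_right _)) (hpb.mul_right _)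

lemma decomp (v u : Fin 3 → ℤ) (hu : dot3 u v = 1) (d : ℤ) (hd : d ≠ 0)
    (a : Fin 3 → ℤ)
    (ha1 : ∀ i, d ∣ cross3 a v i) (ha2 : ∀ i, d ^ 2 ∣ cross3 (cross3 a v) v i) :
    ∃ (l : ℤ) (a₁ : Fin 3 → ℤ), (∀ i, a i = l * v i + d * a₁ i) ∧ d ∣ dot3 a₁ v := by
  choose c hc using ha1
  have hav : cross3 a v = fun j => d * c j := funext hc
  refine ⟨dot3 u a, cross3 u c, ?_, ?_⟩
  · intro i
    have k := triple2 u a v i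
    rw [hav, hu, one_mul] at k
    have k2 : cross3 u (fun j => d * c j) i = d * cross3 u c i := by
      fin_cases i <;> simp [cross3] <;> ring
    rw [k2] at k
    linarith
  · have h5 : ∀ i, d ∣ cross3 c v i := by
      intro i
      have h := ha2 i
      rw [hav] at h
      have k2 : cross3 (fun j => d * c j) v i = d * cross3 c v i := by
        fin_cases i <;> simp [cross3] <;> ring
      rw [k2, pow_two] at h
      exact (mul_dvd_mul_iff_left hd).mp h
    have e : dot3 (cross3 u c) v
        = u 0 * cross3 c v 0 + u 1 * cross3 c v 1 + u 2 * cross3 c v 2 := by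
      simp [dot3, cross3]; ring
    rw [e]
    exact dvd_add (dvd_add ((h5 0).mul_left _) ((h5 1).mul_left _)) ((h5 2).mul_left _)

lemma crossid (v a₁ b₁ : Fin 3 → ℤ) (l m d : ℤ) (i : Fin 3) :
    cross3 (fun j => l * v j + d * a₁ j) (fun j => m * v j + d * b₁ j) i
      = d * (l * cross3 v b₁ i - m * cross3 v a₁ i + d * cross3 a₁ b₁ i) := by
  fin_cases i <;> simp [cross3] <;> ring

lemma keyA (v a₁ b₁ : Fin 3 → ℤ) (l m d : ℤ) (i : Fin 3) :
    cross3 (fun j => l * cross3 v b₁ j - m * cross3 v a₁ j + d * cross3 a₁ b₁ j) v i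
      = l * (dot3 v v * b₁ i - dot3 b₁ v * v i)
        - m * (dot3 v v * a₁ i - dot3 a₁ v * v i)
        + d * cross3 (cross3 a₁ b₁) v i := by
  fin_cases i <;> simp [cross3, dot3] <;> ring

lemma keyB (v a₁ b₁ : Fin 3 → ℤ) (l m d : ℤ) (i : Fin 3) :
    cross3 (cross3 (fun j => l * cross3 v b₁ j - m * cross3 v a₁ j + d * cross3 a₁ b₁ j) v) v i
      = l * (dot3 v v * cross3 b₁ v i)
        - m * (dot3 v v * cross3 a₁ v i)
        + d * (dot3 (cross3 a₁ b₁) v * v i - dot3 v v * cross3 a₁ b₁ i) := by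
  fin_cases i <;> simp [cross3, dot3] <;> ring

/-- For `a, b ∈ Γ(v,d)`, the cross product `a × b` is divisible by `d` and
`(a × b)/d ∈ Γ(v,d)`. -/
theorem Gamma_closed_under_scaled_cross (v : Fin 3 → ℤ) (hv : Primitive v)
    (d : ℤ) (hdvd : d^2 ∣ dot3 v v) (a b : Fin 3 → ℤ)
    (ha : a ∈ GammaSub v d) (hb : b ∈ GammaSub v d) :
    ∃ w ∈ GammaSub v d, d • w = cross3 a b := by
  obtain ⟨ha1, ha2⟩ := ha
  obtain ⟨hb1, hb2⟩ := hb
  obtain ⟨u, hu⟩ := exists_dot3_one v hv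
  by_cases hd : d = 0
  · subst hd
    refine ⟨0, zero_mem _, ?_⟩
    have hav : cross3 a v = fun _ => (0:ℤ) :=
      funext fun i => by simpa using zero_dvd_iff.mp (ha1 i)
    have hbv : cross3 b v = fun _ => (0:ℤ) :=
      funext fun i => by simpa using zero_dvd_iff.mp (hb1 i)
    have haa : ∀ i, a i = dot3 u a * v i := by
      intro i
      have k := triple2 u a v i
      rw [hav, cross3_zero_right', hu, one_mul] at k
      linarith
    have hbb : ∀ i, b i = dot3 u b * v i := by
      intro i
      have k := triple2 u b v i
      rw [hbv, cross3_zero_right', hu, one_mul] at k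
      linarith
    obtain ⟨l, hl⟩ : ∃ l, ∀ i, a i = l * v i := ⟨_, haa⟩
    obtain ⟨m, hm⟩ : ∃ m, ∀ i, b i = m * v i := ⟨_, hbb⟩
    have hab : cross3 a b = 0 := by
      funext i
      rw [show a = fun j => l * v j from funext hl,
        show b = fun j => m * v j from funext hm]
      fin_cases i <;> simp [cross3] <;> ring
    rw [hab, smul_zero]
  · have hdN : d ∣ dot3 v v := dvd_trans (dvd_pow_self d two_ne_zero) hdvd
    obtain ⟨l, a₁, haa, hpa⟩ := decomp v u hu d hd a ha1 ha2
    obtain ⟨m, b₁, hbb, hpb⟩ := decomp v u hu d hd b hb1 hb2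
    have hdet : d ∣ dot3 (cross3 a₁ b₁) v := detdvd v u a₁ b₁ hu d hdN hpa hpb
    refine ⟨fun j => l * cross3 v b₁ j - m * cross3 v a₁ j + d * cross3 a₁ b₁ j,
      ⟨?_, ?_⟩, ?_⟩
    · intro i
      rw [keyA]
      exact dvd_add (dvd_sub ((dvd_sub (hdN.mul_right _) (hpb.mul_right _)).mul_left l)
        ((dvd_sub (hdN.mul_right _) (hpa.mul_right _)).mul_left m)) (dvd_mul_right d _)
    · intro i
      rw [keyB, pow_two]
      have hNN : d * d ∣ dot3 v v := by rwa [pow_two] at hdvd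
      exact dvd_add (dvd_sub ((hNN.mul_right _).mul_left l) ((hNN.mul_right _).mul_left m))
        (mul_dvd_mul_left d (dvd_sub (hdet.mul_right _) (hdN.mul_right _)))
    · funext i
      simp only [Pi.smul_apply, smul_eq_mul]
      rw [show a = fun j => l * v j + d * a₁ j from funext haa,
        show b = fun j => m * v j + d * b₁ j from funext hbb]
      exact (crossid v a₁ b₁ l m d i).symm
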